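/- Let a ∈ (1/2, (√17 − 3)/2) and define b₀ := (2 − 3a − a²)/2, b₂ := a(a+2), b₄ := a(a+1)/2, and w : ℝ → ℝ by w(x) = 2 − |x|^{2a} for |x| ≤ 1 and w(x) = b₀ + b₂/x² − b₄/x⁴ for |x| ≥ 1. Then b₀ > 0, w is twice continuously differentiable on ℝ∖{0}, and w(x) > 0 for every x ∈ ℝ∖{0}. -/

import Mathlib

open Real Filter Set

/-- Derivative of `(y^2)^p`. -/
lemma wdo_hasDerivAt_sq_rpow (p : ℝ) {x : ℝ} (hx : x ≠ 0) :
    HasDerivAt (fun y : ℝ => (y ^ 2) ^ p) (2 * p * x * (x ^ 2) ^ (p - 1)) x := by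
  have h := (hasDerivAt_pow 2 x).rpow_const (p := p) (Or.inl (pow_ne_zero 2 hx))
  convert h using 1
  push_cast
  ring

/-- Derivative of `y * (y^2)^p`. -/
lemma wdo_hasDerivAt_mul_sq_rpow (p : ℝ) {x : ℝ} (hx : x ≠ 0) :
    HasDerivAt (fun y : ℝ => y * (y ^ 2) ^ p) ((1 + 2 * p) * (x ^ 2) ^ p) x := by
  have h := (hasDerivAt_id x).mul (wdo_hasDerivAt_sq_rpow p hx)
  have hx2 : (0 : ℝ) < x ^ 2 := by positivity
  have hkey : (x ^ 2) * (x ^ 2) ^ (p - 1) = (x ^ 2) ^ p := by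
    nth_rewrite 1 [← Real.rpow_one (x ^ 2)]
    rw [← Real.rpow_add hx2]
    congr 1
    ring
  refine h.congr_deriv ?_
  simp only [id_eq]
  linear_combination (2 * p) * hkey

/-- Derivative of the outer formula. -/
lemma wdo_hasDerivAt_outer (b₀ b₂ b₄ : ℝ) {x : ℝ} (hx : x ≠ 0) :
    HasDerivAt (fun y : ℝ => b₀ + b₂ / y ^ 2 - b₄ / y ^ 4)
      (-(2 * b₂) / x ^ 3 + (4 * b₄) / x ^ 5) x := by
  have h2 : HasDerivAt (fun y : ℝ => b₂ / y ^ 2)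
      ((0 * x ^ 2 - b₂ * ((2:ℕ) * x ^ (2 - 1))) / (x ^ 2) ^ 2) x :=
    (hasDerivAt_const x b₂).div (hasDerivAt_pow 2 x) (pow_ne_zero 2 hx)
  have h4 : HasDerivAt (fun y : ℝ => b₄ / y ^ 4)
      ((0 * x ^ 4 - b₄ * ((4:ℕ) * x ^ (4 - 1))) / (x ^ 4) ^ 2) x :=
    (hasDerivAt_const x b₄).div (hasDerivAt_pow 4 x) (pow_ne_zero 4 hx)
  have h := ((hasDerivAt_const x b₀).add h2).sub h4
  refine h.congr_deriv ?_
  field_simp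
  ring

/-- Derivative of the outer first-derivative formula. -/
lemma wdo_hasDerivAt_outer' (b₂ b₄ : ℝ) {x : ℝ} (hx : x ≠ 0) :
    HasDerivAt (fun y : ℝ => -(2 * b₂) / y ^ 3 + (4 * b₄) / y ^ 5)
      ((6 * b₂) / x ^ 4 - (20 * b₄) / x ^ 6) x := by
  have h3 : HasDerivAt (fun y : ℝ => -(2 * b₂) / y ^ 3)
      ((0 * x ^ 3 - -(2 * b₂) * ((3:ℕ) * x ^ (3 - 1))) / (x ^ 3) ^ 2) x :=
    (hasDerivAt_const x (-(2 * b₂))).div (hasDerivAt_pow 3 x) (pow_ne_zero 3 hx)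
  have h5 : HasDerivAt (fun y : ℝ => (4 * b₄) / y ^ 5)
      ((0 * x ^ 5 - (4 * b₄) * ((5:ℕ) * x ^ (5 - 1))) / (x ^ 5) ^ 2) x :=
    (hasDerivAt_const x (4 * b₄)).div (hasDerivAt_pow 5 x) (pow_ne_zero 5 hx)
  have h := h3.add h5
  refine h.congr_deriv ?_
  field_simp
  ring

/-- Tendsto of an `if`-combination when both branches tend to the same limit. -/
lemma wdo_tendsto_if {α : Type*} {p : α → Prop} [DecidablePred p] {f g : α → ℝ}
    {l : Filter α} {L : ℝ} (hf : Tendsto f l (nhds L)) (hg : Tendsto g l (nhds L)) :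
    Tendsto (fun x => if p x then f x else g x) l (nhds L) := by
  rw [Metric.tendsto_nhds] at *
  intro ε hε
  filter_upwards [hf ε hε, hg ε hε] with x h1 h2
  split <;> assumption

/-- Candidate first derivative of the weight. -/
noncomputable def wdoD (a b₂ b₄ : ℝ) (y : ℝ) : ℝ :=
  if |y| ≤ 1 then -(2 * a) * (y * (y ^ 2) ^ (a - 1))
  else -(2 * b₂) / y ^ 3 + (4 * b₄) / y ^ 5

/-- Candidate second derivative of the weight. -/
noncomputable def wdoS (a b₂ b₄ : ℝ) (y : ℝ) : ℝ :=
  if |y| ≤ 1 then (-(2 * a) * (1 + 2 * (a - 1))) * (y ^ 2) ^ (a - 1)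
  else (6 * b₂) / y ^ 4 - (20 * b₄) / y ^ 6

/-- The singular weight used in the uniqueness proof in dimension `N = 1`:
positivity of `b₀`, regularity, and positivity. -/
theorem weight_dim_one
    (a b₀ b₂ b₄ : ℝ) (ha₀ : 1 / 2 < a) (ha₁ : a < (Real.sqrt 17 - 3) / 2)
    (hb₀ : b₀ = (2 - 3 * a - a ^ 2) / 2)
    (hb₂ : b₂ = a * (a + 2))
    (hb₄ : b₄ = a * (a + 1) / 2)
    (w : ℝ → ℝ)
    (hw₁ : ∀ x : ℝ, |x| ≤ 1 → w x = 2 - |x| ^ (2 * a))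
    (hw₂ : ∀ x : ℝ, 1 ≤ |x| → w x = b₀ + b₂ / x ^ 2 - b₄ / x ^ 4) :
    0 < b₀ ∧
    ContDiffOn ℝ 2 w {x : ℝ | x ≠ 0} ∧
    (∀ x : ℝ, x ≠ 0 → 0 < w x) := by
  have ha : (0:ℝ) < a := by linarith
  -- b₀ > 0
  have hsq : (2 * a + 3) ^ 2 < 17 := by
    have h1 : 2 * a + 3 < Real.sqrt 17 := by linarith
    have := (Real.lt_sqrt (by linarith : (0:ℝ) ≤ 2 * a + 3)).mp h1
    linarith
  have hb₀pos : 0 < b₀ := by rw [hb₀]; nlinarith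
  have hb₂pos : 0 < b₂ := by rw [hb₂]; nlinarith
  have hb₄pos : 0 < b₄ := by rw [hb₄]; nlinarith
  -- |x| ^ (2a) = (x^2)^a
  have habs : ∀ x : ℝ, |x| ^ (2 * a) = (x ^ 2 : ℝ) ^ a := by
    intro x
    rw [← sq_abs x, ← Real.rpow_natCast |x| 2, ← Real.rpow_mul (abs_nonneg x)]
    norm_num
  -- rpow values at the boundary
  have h1r : (((1:ℝ) ^ 2 : ℝ)) ^ (a - 1) = 1 := by rw [one_pow, Real.one_rpow]
  have hn1r : ((((-1):ℝ) ^ 2 : ℝ)) ^ (a - 1) = 1 := by rw [neg_one_sq, Real.one_rpow]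
  -- the two branch formulas for w
  have hwW1 : ∀ y : ℝ, |y| ≤ 1 → w y = 2 - (y ^ 2 : ℝ) ^ a := by
    intro y hy; rw [hw₁ y hy, habs]
  have hwW2Ici : ∀ y ∈ Ici (1:ℝ), w y = b₀ + b₂ / y ^ 2 - b₄ / y ^ 4 := by
    intro y hy
    have hy' : (1:ℝ) ≤ y := hy
    exact hw₂ y (by rw [abs_of_pos (by linarith)]; exact hy')
  have hwW2Iic : ∀ y ∈ Iic (-1:ℝ), w y = b₀ + b₂ / y ^ 2 - b₄ / y ^ 4 := by
    intro y hy
    have hy' : y ≤ (-1:ℝ) := hy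
    exact hw₂ y (by rw [abs_of_neg (by linarith)]; linarith)
  -- derivatives of branch formulas
  have hdW1 : ∀ x : ℝ, x ≠ 0 →
      HasDerivAt (fun y : ℝ => 2 - (y ^ 2 : ℝ) ^ a)
        (-(2 * a) * (x * (x ^ 2) ^ (a - 1))) x := by
    intro x hx
    have h := (hasDerivAt_const x (2:ℝ)).sub (wdo_hasDerivAt_sq_rpow a hx)
    refine h.congr_deriv ?_
    ring
  have hdD1 : ∀ x : ℝ, x ≠ 0 →
      HasDerivAt (fun y : ℝ => -(2 * a) * (y * (y ^ 2) ^ (a - 1)))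
        ((-(2 * a) * (1 + 2 * (a - 1))) * (x ^ 2) ^ (a - 1)) x := by
    intro x hx
    have h := (wdo_hasDerivAt_mul_sq_rpow (a - 1) hx).const_mul (-(2 * a))
    refine h.congr_deriv ?_
    ring
  -- boundary value identities
  have habs1 : |(1:ℝ)| ≤ 1 := by norm_num
  have habsneg1 : |(-1:ℝ)| ≤ 1 := by norm_num
  have hD1val : wdoD a b₂ b₄ 1 = -(2 * a) := by
    rw [wdoD, if_pos habs1, h1r]; ring
  have hDneg1val : wdoD a b₂ b₄ (-1) = 2 * a := by
    rw [wdoD, if_pos habsneg1, hn1r]; ring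
  have hS1val : wdoS a b₂ b₄ 1 = -(2 * a) * (1 + 2 * (a - 1)) := by
    rw [wdoS, if_pos habs1, h1r]; ring
  have hSneg1val : wdoS a b₂ b₄ (-1) = -(2 * a) * (1 + 2 * (a - 1)) := by
    rw [wdoS, if_pos habsneg1, hn1r]; ring
  -- open sets for interior congruence
  have hlt_open : IsOpen {y : ℝ | |y| < 1} := isOpen_lt continuous_abs continuous_const
  have hgt_open : IsOpen {y : ℝ | 1 < |y|} := isOpen_lt continuous_const continuous_abs
  -- w = branch eventually near interior points
  have hev1 : ∀ x : ℝ, |x| < 1 → w =ᶠ[nhds x] fun y => 2 - (y ^ 2 : ℝ) ^ a := by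
    intro x hx
    filter_upwards [hlt_open.mem_nhds hx] with y hy
    exact hwW1 y (le_of_lt hy)
  have hev2 : ∀ x : ℝ, 1 < |x| → w =ᶠ[nhds x] fun y => b₀ + b₂ / y ^ 2 - b₄ / y ^ 4 := by
    intro x hx
    filter_upwards [hgt_open.mem_nhds hx] with y hy
    rcases le_or_gt 1 y with h | h
    · exact hwW2Ici y h
    · refine hwW2Iic y ?_
      have : 1 < -y := by
        rcases abs_cases y with ⟨h1, _⟩ | ⟨h1, _⟩
        · exfalso; rw [h1] at hy; linarith
        · rw [h1] at hy; exact hy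
      exact mem_Iic.mpr (by linarith)
  -- D = branches, pointwise / eventually
  have hDinner : ∀ y : ℝ, |y| ≤ 1 → wdoD a b₂ b₄ y = -(2 * a) * (y * (y ^ 2) ^ (a - 1)) := by
    intro y hy; rw [wdoD, if_pos hy]
  have hDouter : ∀ y : ℝ, 1 < |y| →
      wdoD a b₂ b₄ y = -(2 * b₂) / y ^ 3 + (4 * b₄) / y ^ 5 := by
    intro y hy; rw [wdoD, if_neg (not_le.mpr hy)]
  have hSinner : ∀ y : ℝ, |y| ≤ 1 →
      wdoS a b₂ b₄ y = (-(2 * a) * (1 + 2 * (a - 1))) * (y ^ 2) ^ (a - 1) := by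
    intro y hy; rw [wdoS, if_pos hy]
  have hSouter : ∀ y : ℝ, 1 < |y| →
      wdoS a b₂ b₄ y = (6 * b₂) / y ^ 4 - (20 * b₄) / y ^ 6 := by
    intro y hy; rw [wdoS, if_neg (not_le.mpr hy)]
  -- the outer formula for D matches on all of Ici 1 and Iic (-1)
  have hDmatch1 : -(2 * b₂) / (1:ℝ) ^ 3 + (4 * b₄) / (1:ℝ) ^ 5 = wdoD a b₂ b₄ 1 := by
    rw [hD1val, hb₂, hb₄]; ring
  have hDmatchneg1 : -(2 * b₂) / (-1:ℝ) ^ 3 + (4 * b₄) / (-1:ℝ) ^ 5 = wdoD a b₂ b₄ (-1) := by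
    rw [hDneg1val, hb₂, hb₄]; ring
  have hSmatch1 : (6 * b₂) / (1:ℝ) ^ 4 - (20 * b₄) / (1:ℝ) ^ 6 = wdoS a b₂ b₄ 1 := by
    rw [hS1val, hb₂, hb₄]; ring
  have hSmatchneg1 : (6 * b₂) / (-1:ℝ) ^ 4 - (20 * b₄) / (-1:ℝ) ^ 6 = wdoS a b₂ b₄ (-1) := by
    rw [hSneg1val, hb₂, hb₄]; ring
  have hDIci : ∀ y ∈ Ici (1:ℝ), wdoD a b₂ b₄ y = -(2 * b₂) / y ^ 3 + (4 * b₄) / y ^ 5 := by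
    intro y hy
    have hy' : (1:ℝ) ≤ y := hy
    rcases eq_or_lt_of_le hy' with h | h
    · rw [← h]; exact hDmatch1.symm
    · exact hDouter y (by rw [abs_of_pos (by linarith)]; exact h)
  have hDIic : ∀ y ∈ Iic (-1:ℝ), wdoD a b₂ b₄ y = -(2 * b₂) / y ^ 3 + (4 * b₄) / y ^ 5 := by
    intro y hy
    have hy' : y ≤ (-1:ℝ) := hy
    rcases eq_or_lt_of_le hy' with h | h
    · rw [h]; exact hDmatchneg1.symm
    · exact hDouter y (by rw [abs_of_neg (by linarith)]; linarith)
  -- eventual facts within one-sided neighborhoods at ±1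
  have hIic1 : ∀ᶠ y in nhdsWithin (1:ℝ) (Iic 1), |y| ≤ 1 := by
    have h0 : ∀ᶠ y in nhds (1:ℝ), 0 < y := eventually_gt_nhds (by norm_num)
    filter_upwards [eventually_nhdsWithin_of_eventually_nhds h0,
      self_mem_nhdsWithin] with y hy hy'
    rw [abs_le]; exact ⟨by linarith, hy'⟩
  have hIcin1 : ∀ᶠ y in nhdsWithin (-1:ℝ) (Ici (-1)), |y| ≤ 1 := by
    have h0 : ∀ᶠ y in nhds (-1:ℝ), y < 0 := eventually_lt_nhds (by norm_num)
    filter_upwards [eventually_nhdsWithin_of_eventually_nhds h0,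
      self_mem_nhdsWithin] with y hy hy'
    rw [abs_le]; exact ⟨hy', by linarith⟩
  have h1Ici : (1:ℝ) ∈ Ici (1:ℝ) := self_mem_Ici
  have hn1Iic : (-1:ℝ) ∈ Iic (-1:ℝ) := self_mem_Iic
  -- first derivative of w everywhere on s
  have hA : ∀ x : ℝ, x ≠ 0 → HasDerivAt w (wdoD a b₂ b₄ x) x := by
    intro x hx
    rcases lt_trichotomy |x| 1 with hx1 | hx1 | hx1
    · rw [hDinner x (le_of_lt hx1)]
      exact (hdW1 x hx).congr_of_eventuallyEq (hev1 x hx1)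
    · rcases (abs_eq (by norm_num : (0:ℝ) ≤ 1)).mp hx1 with h1 | h1
      · subst h1
        have hleft : HasDerivWithinAt w (wdoD a b₂ b₄ 1) (Iic 1) 1 := by
          have h := ((hdW1 1 one_ne_zero).hasDerivWithinAt (s := Iic 1)).congr_of_eventuallyEq
            (by filter_upwards [hIic1] with y hy using hwW1 y hy) (hwW1 1 habs1)
          have heq : -(2 * a) * (1 * ((1:ℝ) ^ 2) ^ (a - 1)) = wdoD a b₂ b₄ 1 := by
            rw [hD1val, h1r]; ring
          rwa [heq] at h
        have hright : HasDerivWithinAt w (wdoD a b₂ b₄ 1) (Ici 1) 1 := by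
          have h := ((wdo_hasDerivAt_outer b₀ b₂ b₄
            one_ne_zero).hasDerivWithinAt (s := Ici 1)).congr hwW2Ici (hwW2Ici 1 h1Ici)
          rwa [hDmatch1] at h
        have h := hleft.union hright
        rw [Iic_union_Ici, hasDerivWithinAt_univ] at h
        exact h
      · subst h1
        have hleft : HasDerivWithinAt w (wdoD a b₂ b₄ (-1)) (Iic (-1)) (-1) := by
          have h := ((wdo_hasDerivAt_outer b₀ b₂ b₄
            (by norm_num : (-1:ℝ) ≠ 0)).hasDerivWithinAt (s := Iic (-1))).congr
            hwW2Iic (hwW2Iic (-1) hn1Iic)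
          rwa [hDmatchneg1] at h
        have hright : HasDerivWithinAt w (wdoD a b₂ b₄ (-1)) (Ici (-1)) (-1) := by
          have h := ((hdW1 (-1) (by norm_num)).hasDerivWithinAt
            (s := Ici (-1))).congr_of_eventuallyEq
            (by filter_upwards [hIcin1] with y hy using hwW1 y hy) (hwW1 (-1) habsneg1)
          have heq : -(2 * a) * ((-1) * (((-1):ℝ) ^ 2) ^ (a - 1)) = wdoD a b₂ b₄ (-1) := by
            rw [hDneg1val, hn1r]; ring
          rwa [heq] at h
        have h := hleft.union hright
        rw [Iic_union_Ici, hasDerivWithinAt_univ] at h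
        exact h
    · rw [hDouter x hx1]
      exact (wdo_hasDerivAt_outer b₀ b₂ b₄ hx).congr_of_eventuallyEq (hev2 x hx1)
  -- second derivative: D has derivative S everywhere on s
  have hB : ∀ x : ℝ, x ≠ 0 → HasDerivAt (wdoD a b₂ b₄) (wdoS a b₂ b₄ x) x := by
    intro x hx
    rcases lt_trichotomy |x| 1 with hx1 | hx1 | hx1
    · rw [hSinner x (le_of_lt hx1)]
      refine (hdD1 x hx).congr_of_eventuallyEq ?_
      filter_upwards [hlt_open.mem_nhds hx1] with y hy
      exact hDinner y (le_of_lt hy)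
    · rcases (abs_eq (by norm_num : (0:ℝ) ≤ 1)).mp hx1 with h1 | h1
      · subst h1
        have hleft : HasDerivWithinAt (wdoD a b₂ b₄) (wdoS a b₂ b₄ 1) (Iic 1) 1 := by
          have h := ((hdD1 1 one_ne_zero).hasDerivWithinAt (s := Iic 1)).congr_of_eventuallyEq
            (by filter_upwards [hIic1] with y hy using hDinner y hy) (hDinner 1 habs1)
          have heq : (-(2 * a) * (1 + 2 * (a - 1))) * (((1:ℝ)) ^ 2) ^ (a - 1)
              = wdoS a b₂ b₄ 1 := by rw [hS1val, h1r]; ring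
          rwa [heq] at h
        have hright : HasDerivWithinAt (wdoD a b₂ b₄) (wdoS a b₂ b₄ 1) (Ici 1) 1 := by
          have h := ((wdo_hasDerivAt_outer' b₂ b₄
            one_ne_zero).hasDerivWithinAt (s := Ici 1)).congr hDIci (hDIci 1 h1Ici)
          rwa [hSmatch1] at h
        have h := hleft.union hright
        rw [Iic_union_Ici, hasDerivWithinAt_univ] at h
        exact h
      · subst h1
        have hleft : HasDerivWithinAt (wdoD a b₂ b₄) (wdoS a b₂ b₄ (-1)) (Iic (-1)) (-1) := by
          have h := ((wdo_hasDerivAt_outer' b₂ b₄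
            (by norm_num : (-1:ℝ) ≠ 0)).hasDerivWithinAt (s := Iic (-1))).congr
            hDIic (hDIic (-1) hn1Iic)
          rwa [hSmatchneg1] at h
        have hright : HasDerivWithinAt (wdoD a b₂ b₄) (wdoS a b₂ b₄ (-1)) (Ici (-1)) (-1) := by
          have h := ((hdD1 (-1) (by norm_num)).hasDerivWithinAt
            (s := Ici (-1))).congr_of_eventuallyEq
            (by filter_upwards [hIcin1] with y hy using hDinner y hy) (hDinner (-1) habsneg1)
          have heq : (-(2 * a) * (1 + 2 * (a - 1))) * ((((-1):ℝ)) ^ 2) ^ (a - 1)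
              = wdoS a b₂ b₄ (-1) := by rw [hSneg1val, hn1r]; ring
          rwa [heq] at h
        have h := hleft.union hright
        rw [Iic_union_Ici, hasDerivWithinAt_univ] at h
        exact h
    · rw [hSouter x hx1]
      refine (wdo_hasDerivAt_outer' b₂ b₄ hx).congr_of_eventuallyEq ?_
      filter_upwards [hgt_open.mem_nhds hx1] with y hy
      exact hDouter y hy
  -- continuity of S on s
  have hScont : ContinuousOn (wdoS a b₂ b₄) {x : ℝ | x ≠ 0} := by
    intro x hx
    have hx' : x ≠ 0 := hx
    apply ContinuousAt.continuousWithinAt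
    have hc1 : ContinuousAt (fun y : ℝ => (-(2 * a) * (1 + 2 * (a - 1))) * (y ^ 2) ^ (a - 1)) x :=
      (((continuous_pow 2).continuousAt).rpow_const
        (Or.inl (pow_ne_zero 2 hx'))).const_mul _
    have hc2 : ContinuousAt (fun y : ℝ => (6 * b₂) / y ^ 4 - (20 * b₄) / y ^ 6) x :=
      (continuousAt_const.div ((continuous_pow 4).continuousAt)
        (pow_ne_zero 4 hx')).sub
        (continuousAt_const.div ((continuous_pow 6).continuousAt) (pow_ne_zero 6 hx'))
    rcases lt_trichotomy |x| 1 with hx1 | hx1 | hx1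
    · refine hc1.congr ?_
      filter_upwards [hlt_open.mem_nhds hx1] with y hy
      exact (hSinner y (le_of_lt hy)).symm
    · -- boundary: both branches agree
      have hmatch : (6 * b₂) / x ^ 4 - (20 * b₄) / x ^ 6
          = (-(2 * a) * (1 + 2 * (a - 1))) * (x ^ 2) ^ (a - 1) := by
        rcases (abs_eq (by norm_num : (0:ℝ) ≤ 1)).mp hx1 with h1 | h1 <;> subst h1
        · rw [h1r, hb₂, hb₄]; ring
        · rw [hn1r, hb₂, hb₄]; ring
      have hc2' : Tendsto (fun y : ℝ => (6 * b₂) / y ^ 4 - (20 * b₄) / y ^ 6) (nhds x)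
          (nhds ((-(2 * a) * (1 + 2 * (a - 1))) * (x ^ 2) ^ (a - 1))) := by
        rw [← hmatch]; exact hc2
      have h := wdo_tendsto_if (p := fun y : ℝ => |y| ≤ 1) hc1 hc2'
      have hSx : wdoS a b₂ b₄ x = (-(2 * a) * (1 + 2 * (a - 1))) * (x ^ 2) ^ (a - 1) :=
        hSinner x (le_of_eq hx1)
      unfold ContinuousAt
      rw [hSx]
      exact h
    · refine hc2.congr ?_
      filter_upwards [hgt_open.mem_nhds hx1] with y hy
      exact (hSouter y hy).symm
  -- assemble ContDiffOn
  have hs_open : IsOpen {x : ℝ | x ≠ 0} := isOpen_ne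
  have hcd : ContDiffOn ℝ 2 w {x : ℝ | x ≠ 0} := by
    rw [show (2 : WithTop ℕ∞) = 1 + 1 by norm_num,
      contDiffOn_succ_iff_deriv_of_isOpen hs_open]
    refine ⟨fun x hx => (hA x hx).differentiableAt.differentiableWithinAt,
      by simp, ?_⟩
    have hder : ∀ x ∈ {x : ℝ | x ≠ 0}, deriv w x = wdoD a b₂ b₄ x :=
      fun x hx => (hA x hx).deriv
    refine ContDiffOn.congr ?_ hder
    rw [show (1 : WithTop ℕ∞) = 0 + 1 by norm_num,
      contDiffOn_succ_iff_deriv_of_isOpen hs_open]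
    refine ⟨fun x hx => (hB x hx).differentiableAt.differentiableWithinAt,
      by simp, ?_⟩
    rw [contDiffOn_zero]
    have hder2 : ∀ x ∈ {x : ℝ | x ≠ 0}, deriv (wdoD a b₂ b₄) x = wdoS a b₂ b₄ x :=
      fun x hx => (hB x hx).deriv
    exact hScont.congr fun x hx => hder2 x hx
  -- positivity of w
  refine ⟨hb₀pos, hcd, ?_⟩
  intro x hx
  rcases le_or_gt |x| 1 with hx1 | hx1
  · rw [hw₁ x hx1]
    have h1 : |x| ^ (2 * a) ≤ 1 :=
      Real.rpow_le_one (abs_nonneg x) hx1 (by linarith)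
    linarith
  · rw [hw₂ x (le_of_lt hx1)]
    have hy : (1:ℝ) ≤ x ^ 2 := by nlinarith [sq_abs x, abs_nonneg x]
    have hy0 : (0:ℝ) < x ^ 2 := by positivity
    have hkey : 0 < b₀ * (x ^ 2) ^ 2 + b₂ * x ^ 2 - b₄ := by nlinarith
    have heq : b₀ + b₂ / x ^ 2 - b₄ / x ^ 4
        = (b₀ * (x ^ 2) ^ 2 + b₂ * x ^ 2 - b₄) / (x ^ 2) ^ 2 := by
      field_simp
    rw [heq]
    positivity
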